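/- Let H be a finite group, N a normal subgroup of H, and λ : N →* ℂˣ an H-invariant character, i.e. λ(hnh⁻¹) = λ(n) for all h ∈ H and n ∈ N. In the monoid algebra ℂ[H], the element e_λ := |N|⁻¹ · Σ_{n ∈ N} λ(n)⁻¹ • n is a central idempotent, and the left ideal ℂ[H]·e_λ (the range of right multiplication by e_λ) has dimension [H : N] over ℂ. -/

import Mathlib

/-- The central idempotent `e_λ = |N|⁻¹ · Σ_{n ∈ N} λ(n)⁻¹ • n` in the group algebra `ℂ[H]`
attached to a character `λ` of a subgroup `N`. -/
noncomputable def centralIdem {H : Type*} [Group H] (N : Subgroup H) [Fintype ↥N]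
    (lam : ↥N →* ℂˣ) : MonoidAlgebra ℂ H :=
  (Fintype.card ↥N : ℂ)⁻¹ •
    ∑ n : ↥N, (((lam n)⁻¹ : ℂˣ) : ℂ) • MonoidAlgebra.of ℂ H (n : H)

section Aux

variable {H : Type*} [Group H] (N : Subgroup H) [Fintype ↥N] (lam : ↥N →* ℂˣ)

/-- The unnormalized sum. -/
noncomputable def centralSum : MonoidAlgebra ℂ H :=
  ∑ n : ↥N, (((lam n)⁻¹ : ℂˣ) : ℂ) • MonoidAlgebra.single (n : H) (1 : ℂ)

lemma centralIdem_eq :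
    centralIdem N lam = (Fintype.card ↥N : ℂ)⁻¹ • centralSum N lam := rfl

lemma centralSum_mul_self :
    centralSum N lam * centralSum N lam = (Fintype.card ↥N : ℂ) • centralSum N lam := by
  unfold centralSum
  rw [Finset.sum_mul_sum]
  have key : ∀ n : ↥N,
      ∑ m : ↥N, ((((lam n)⁻¹ : ℂˣ) : ℂ) • MonoidAlgebra.single (n : H) (1 : ℂ)) *
        ((((lam m)⁻¹ : ℂˣ) : ℂ) • MonoidAlgebra.single (m : H) (1 : ℂ)) =
      ∑ k : ↥N, (((lam k)⁻¹ : ℂˣ) : ℂ) • MonoidAlgebra.single (k : H) (1 : ℂ) := by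
    intro n
    refine Fintype.sum_equiv (Equiv.mulLeft n) _ _ (fun m => ?_)
    rw [smul_mul_smul_comm, MonoidAlgebra.single_mul_single, one_mul]
    simp [Equiv.coe_mulLeft, map_mul, mul_inv, mul_comm]
  rw [Finset.sum_congr rfl (fun n _ => key n), Finset.sum_const, Finset.card_univ,
    ← Nat.cast_smul_eq_nsmul ℂ]

lemma card_coe_ne_zero : (Fintype.card ↥N : ℂ) ≠ 0 := by
  exact_mod_cast Fintype.card_ne_zero

lemma centralIdem_mul_self :
    centralIdem N lam * centralIdem N lam = centralIdem N lam := by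
  rw [centralIdem_eq, smul_mul_smul_comm, centralSum_mul_self, smul_smul,
    mul_assoc, inv_mul_cancel₀ (card_coe_ne_zero N), mul_one]

/-- Conjugation equivalence of `N` by `h⁻¹`. -/
def conjEquiv (hN : N.Normal) (h : H) : ↥N ≃ ↥N where
  toFun n := ⟨h⁻¹ * (n : H) * (h⁻¹)⁻¹, hN.conj_mem (n : H) n.2 h⁻¹⟩
  invFun n := ⟨h * (n : H) * h⁻¹, hN.conj_mem (n : H) n.2 h⟩
  left_inv n := by ext; simp [mul_assoc]
  right_inv n := by ext; simp [mul_assoc]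

/-- The standard basis of the monoid algebra. -/
noncomputable def maBasis (H : Type*) [Group H] : Module.Basis H ℂ (MonoidAlgebra ℂ H) :=
  MonoidAlgebra.basis H ℂ

end Aux

/-- for a finite group `H`, a normal subgroup `N`, and an `H`-invariant
character `λ : N →* ℂˣ`, the element `e_λ = |N|⁻¹ Σ_{n∈N} λ(n)⁻¹ • n` of `ℂ[H]` is a
central idempotent, and the left ideal `ℂ[H]·e_λ` (the range of right multiplication
by `e_λ`) has dimension `[H : N]` over `ℂ`. -/
theorem centralIdem_isIdempotent_central_finrank_range
    {H : Type*} [Group H] [Fintype H] (N : Subgroup H) (hN : N.Normal) [Fintype ↥N]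
    (lam : ↥N →* ℂˣ)
    (hinv : ∀ (h : H) (n : ↥N),
      lam ⟨h * (n : H) * h⁻¹, hN.conj_mem (n : H) n.2 h⟩ = lam n) :
    centralIdem N lam * centralIdem N lam = centralIdem N lam ∧
    (∀ x : MonoidAlgebra ℂ H, centralIdem N lam * x = x * centralIdem N lam) ∧
    Module.finrank ℂ
        ↥(LinearMap.range (LinearMap.mulRight ℂ (centralIdem N lam))) = N.index := by
  set e := centralIdem N lam with he_def
  have hidem : e * e = e := centralIdem_mul_self N lam
  -- centrality
  have hsingle : ∀ h : H, centralSum N lam * MonoidAlgebra.single h (1 : ℂ) =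
      MonoidAlgebra.single h (1 : ℂ) * centralSum N lam := by
    intro h
    unfold centralSum
    rw [Finset.sum_mul, Finset.mul_sum]
    refine Fintype.sum_equiv (conjEquiv N hN h) _ _ (fun n => ?_)
    have hl : lam (conjEquiv N hN h n) = lam n := hinv h⁻¹ n
    rw [smul_mul_assoc, mul_smul_comm, MonoidAlgebra.single_mul_single,
      MonoidAlgebra.single_mul_single, hl]
    congr 2
    show (n : H) * h = h * (h⁻¹ * (n : H) * (h⁻¹)⁻¹)
    group
  have hcentral : ∀ x : MonoidAlgebra ℂ H, e * x = x * e := by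
    intro x
    have key : LinearMap.mulLeft ℂ e = LinearMap.mulRight ℂ e := by
      refine MonoidAlgebra.lhom_ext' (fun a => LinearMap.ext_ring ?_)
      simp only [LinearMap.comp_apply, MonoidAlgebra.lsingle_apply,
        LinearMap.mulLeft_apply, LinearMap.mulRight_apply]
      rw [he_def, centralIdem_eq, smul_mul_assoc, mul_smul_comm, hsingle a]
    have := congrFun (congrArg DFunLike.coe key) x
    simpa using this
  refine ⟨hidem, hcentral, ?_⟩
  -- dimension
  set f := LinearMap.mulRight ℂ e with hf
  have hproj : LinearMap.IsProj (LinearMap.range f) f := by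
    constructor
    · intro x; exact LinearMap.mem_range_self f x
    · rintro x ⟨y, rfl⟩
      show (y * e) * e = y * e
      rw [mul_assoc, hidem]
  haveI : Module.Finite ℂ (MonoidAlgebra ℂ H) :=
    Module.Finite.of_basis (MonoidAlgebra.basis H ℂ)
  have htr := hproj.trace
  -- compute the trace
  have hb : LinearMap.trace ℂ (MonoidAlgebra ℂ H) f = (N.index : ℂ) := by
    classical
    rw [LinearMap.trace_eq_matrix_trace ℂ
      (maBasis H), Matrix.trace]
    have hdiag : ∀ h : H,
        (LinearMap.toMatrix (maBasis H) (maBasis H)) f h h = (Fintype.card ↥N : ℂ)⁻¹ := by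
      intro h
      rw [LinearMap.toMatrix_apply]
      have hbh : (maBasis H) h
          = MonoidAlgebra.single h (1 : ℂ) := rfl
      have hrepr : ∀ x : MonoidAlgebra ℂ H,
          (maBasis H).repr x h = x.coeff h := by
        intro x; rfl
      rw [hbh, hrepr]
      show (MonoidAlgebra.single h (1 : ℂ) * e).coeff h = (Fintype.card ↥N : ℂ)⁻¹
      rw [MonoidAlgebra.coeff_single_mul_apply, one_mul, inv_mul_cancel]
      show ((Fintype.card ↥N : ℂ)⁻¹ • centralSum N lam).coeff 1 = _
      rw [MonoidAlgebra.coeff_smul_apply]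
      have h1 : (centralSum N lam).coeff (1 : H) = 1 := by
        unfold centralSum
        rw [MonoidAlgebra.coeff_sum, Finsupp.finset_sum_apply]
        rw [Finset.sum_eq_single (1 : ↥N)]
        · simp
        · intro n _ hn
          rw [MonoidAlgebra.coeff_smul_apply, MonoidAlgebra.coeff_single, Finsupp.single_apply, if_neg, smul_zero]
          simpa using hn
        · simp
      rw [h1, smul_eq_mul, mul_one]
    simp only [Matrix.diag_apply, hdiag, Finset.sum_const, Finset.card_univ,
      nsmul_eq_mul]
    have hcard : (Fintype.card H : ℂ) = (Fintype.card ↥N : ℂ) * (N.index : ℂ) := by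
      have := Subgroup.card_mul_index N
      rw [Nat.card_eq_fintype_card, Nat.card_eq_fintype_card] at this
      exact_mod_cast this.symm
    rw [hcard, mul_comm, ← mul_assoc, inv_mul_cancel₀ (card_coe_ne_zero N), one_mul]
  rw [hb] at htr
  exact_mod_cast htr.symm
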